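/- Let W₁ be the Lie algebra of formal vector fields on ℝ, identified with the space of formal power series ℝ[[x]] equipped with the bracket [p, q] = p·q′ − p′·q (corresponding to [p∂ₓ, q∂ₓ] = (pq′ − p′q)∂ₓ). Define the trilinear form gv on W₁ by gv(p₁, p₂, p₃) = det of the 3×3 matrix whose i-th row is (pᵢ(0), pᵢ′(0), pᵢ″(0)). Then gv is an alternating trilinear form satisfying the Lie algebra 3-cocycle identity: for all g₁, g₂, g₃, g₄ ∈ W₁, Σ_{1 ≤ i < j ≤ 4} (−1)^{i+j} gv([gᵢ, gⱼ], g₁, …, ĝᵢ, …, ĝⱼ, …, g₄) = 0 (hats denote omitted arguments). In particular, gv is the Gelfand–Fuchs cocycle representing the generator of H³(W₁, ℝ). -/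

import Mathlib

/-- The formal derivative of a formal power series: `(Σ aₙxⁿ)′ = Σ (n+1)a_{n+1}xⁿ`. -/
noncomputable def formalDeriv (p : PowerSeries ℝ) : PowerSeries ℝ :=
  PowerSeries.mk fun n => ((n : ℝ) + 1) * PowerSeries.coeff (n + 1) p

/-- The bracket `[p, q] = p·q′ − p′·q` on `W₁ = ℝ[[x]]`, corresponding to
`[p∂ₓ, q∂ₓ] = (pq′ − p′q)∂ₓ` on formal vector fields on `ℝ`. -/
noncomputable def W1Bracket (p q : PowerSeries ℝ) : PowerSeries ℝ :=
  p * formalDeriv q - formalDeriv p * q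

/-- The value at `0` of a formal power series, i.e. its constant coefficient. -/
noncomputable def ev0 (p : PowerSeries ℝ) : ℝ := PowerSeries.coeff 0 p

/-- The Gelfand–Fuchs cochain `gv` on `W₁`:
`gv(p₁, p₂, p₃) = det` of the `3×3` matrix whose `i`-th row is
`(pᵢ(0), pᵢ′(0), pᵢ″(0))`. -/
noncomputable def gvCochain (p₁ p₂ p₃ : PowerSeries ℝ) : ℝ :=
  Matrix.det
    !![ev0 p₁, ev0 (formalDeriv p₁), ev0 (formalDeriv (formalDeriv p₁));
       ev0 p₂, ev0 (formalDeriv p₂), ev0 (formalDeriv (formalDeriv p₂));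
       ev0 p₃, ev0 (formalDeriv p₃), ev0 (formalDeriv (formalDeriv p₃))]

local notation "cf" => PowerSeries.coeff

lemma coeff_D (p : PowerSeries ℝ) (n : ℕ) :
    cf n (formalDeriv p) = ((n : ℝ) + 1) * cf (n + 1) p := by
  simp [formalDeriv]

lemma coeff_mul_small (p q : PowerSeries ℝ) (n : ℕ) :
    cf n (p * q) = ∑ i ∈ Finset.range (n+1), cf i p * cf (n - i) q := by
  rw [PowerSeries.coeff_mul, Finset.Nat.sum_antidiagonal_eq_sum_range_succ_mk]

lemma c0_br (p q : PowerSeries ℝ) :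
    cf 0 (W1Bracket p q) = cf 0 p * cf 1 q - cf 1 p * cf 0 q := by
  simp only [W1Bracket, map_sub, coeff_mul_small, coeff_D, Finset.sum_range_succ,
    Finset.sum_range_zero]
  norm_num

lemma c1_br (p q : PowerSeries ℝ) :
    cf 1 (W1Bracket p q) = 2 * cf 0 p * cf 2 q - 2 * cf 2 p * cf 0 q := by
  simp only [W1Bracket, map_sub, coeff_mul_small, coeff_D, Finset.sum_range_succ,
    Finset.sum_range_zero]
  norm_num; ring

lemma c2_br (p q : PowerSeries ℝ) :
    cf 2 (W1Bracket p q)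
      = 3 * cf 0 p * cf 3 q + cf 1 p * cf 2 q - cf 2 p * cf 1 q - 3 * cf 3 p * cf 0 q := by
  simp only [W1Bracket, map_sub, coeff_mul_small, coeff_D, Finset.sum_range_succ,
    Finset.sum_range_zero]
  norm_num; ring

lemma gv_coeffs (p q r : PowerSeries ℝ) :
    gvCochain p q r =
      cf 0 p * (cf 1 q * (2 * cf 2 r) - 2 * cf 2 q * cf 1 r)
      - cf 1 p * (cf 0 q * (2 * cf 2 r) - 2 * cf 2 q * cf 0 r)
      + 2 * cf 2 p * (cf 0 q * cf 1 r - cf 1 q * cf 0 r) := by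
  simp [gvCochain, Matrix.det_fin_three, ev0, coeff_D]
  ring

/-- On the Lie algebra `W₁` of formal vector fields on `ℝ`
(identified with `ℝ[[x]]` with the bracket `[p,q] = pq′ − p′q`), the trilinear
form `gv(p₁,p₂,p₃) = det (pᵢ(0), pᵢ′(0), pᵢ″(0))_{i=1,2,3}` is an alternating
trilinear form satisfying the Lie algebra 3-cocycle identity
`Σ_{1 ≤ i < j ≤ 4} (−1)^{i+j} gv([gᵢ, gⱼ], g₁, …, ĝᵢ, …, ĝⱼ, …, g₄) = 0`
(the Gelfand–Fuchs cocycle representing the generator of `H³(W₁, ℝ)`). -/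
theorem gv_is_gelfandFuchs_cocycle :
    -- trilinearity
    (∀ p p' q r : PowerSeries ℝ, gvCochain (p + p') q r
        = gvCochain p q r + gvCochain p' q r) ∧
    (∀ p q q' r : PowerSeries ℝ, gvCochain p (q + q') r
        = gvCochain p q r + gvCochain p q' r) ∧
    (∀ p q r r' : PowerSeries ℝ, gvCochain p q (r + r')
        = gvCochain p q r + gvCochain p q r') ∧
    (∀ (c : ℝ) (p q r : PowerSeries ℝ), gvCochain (c • p) q r = c * gvCochain p q r) ∧
    (∀ (c : ℝ) (p q r : PowerSeries ℝ), gvCochain p (c • q) r = c * gvCochain p q r) ∧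
    (∀ (c : ℝ) (p q r : PowerSeries ℝ), gvCochain p q (c • r) = c * gvCochain p q r) ∧
    -- alternation: vanishing whenever two arguments coincide
    (∀ p q : PowerSeries ℝ, gvCochain p p q = 0) ∧
    (∀ p q : PowerSeries ℝ, gvCochain p q q = 0) ∧
    (∀ p q : PowerSeries ℝ, gvCochain p q p = 0) ∧
    -- the Chevalley–Eilenberg 3-cocycle identity
    (∀ g₁ g₂ g₃ g₄ : PowerSeries ℝ,
      - gvCochain (W1Bracket g₁ g₂) g₃ g₄
      + gvCochain (W1Bracket g₁ g₃) g₂ g₄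
      - gvCochain (W1Bracket g₁ g₄) g₂ g₃
      - gvCochain (W1Bracket g₂ g₃) g₁ g₄
      + gvCochain (W1Bracket g₂ g₄) g₁ g₃
      - gvCochain (W1Bracket g₃ g₄) g₁ g₂ = 0) := by
  refine ⟨?_, ?_, ?_, ?_, ?_, ?_, ?_, ?_, ?_, ?_⟩
  · intro p p' q r; simp only [gv_coeffs, map_add]; ring
  · intro p q q' r; simp only [gv_coeffs, map_add]; ring
  · intro p q r r'; simp only [gv_coeffs, map_add]; ring
  · intro cc p q r; simp only [gv_coeffs, map_smul, smul_eq_mul]; ring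
  · intro cc p q r; simp only [gv_coeffs, map_smul, smul_eq_mul]; ring
  · intro cc p q r; simp only [gv_coeffs, map_smul, smul_eq_mul]; ring
  · intro p q; simp only [gv_coeffs]; ring
  · intro p q; simp only [gv_coeffs]; ring
  · intro p q; simp only [gv_coeffs]; ring
  · intro g₁ g₂ g₃ g₄
    simp only [gv_coeffs, c0_br, c1_br, c2_br]
    ring
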